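/- Let 1 > r_1 ≥ r_2 ≥ ⋯ ≥ r_J > 0 with J ≥ 2, let D be the unique real root of ∑_{j=1}^J r_j^D = 1, and let D̃ be the unique real root of ∑_{j=1}^{J−1} r_j^{D̃} = 1 (so D̃ < D). Let f(s) = 1 − (r_1^s + ⋯ + r_J^s). Then every zero s_0 of f with D̃ < Re(s_0) < D satisfies Re(f′(s_0)) ≥ log r_1^{−1} > 0; in particular every such zero of f is simple, and |1/f′(s_0)| ≤ 1/log r_1^{−1}. Equivalently, all poles of ζ(s) = 1/f(s) in the strip {s : D̃ < Re(s) < D} are simple and their residues are bounded in absolute value by 1/log r_1^{−1}. -/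

import Mathlib

private lemma abel_key (m : ℕ) (L A : ℕ → ℝ)
    (hL : ∀ i, i < m → L i ≤ L (i + 1))
    (hsum : ∑ i ∈ Finset.range (m + 1), A i = 1)
    (hpartial : ∀ k, k ≤ m → ∑ i ∈ Finset.range k, A i ≤ 1) :
    L 0 ≤ ∑ i ∈ Finset.range (m + 1), L i * A i := by
  have hby := Finset.sum_range_by_parts L A (m + 1)
  simp only [smul_eq_mul, Nat.add_sub_cancel, hsum, mul_one] at hby
  rw [hby]
  have h1 : ∑ i ∈ Finset.range m, (L (i + 1) - L i) * (∑ j ∈ Finset.range (i + 1), A j)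
      ≤ ∑ i ∈ Finset.range m, (L (i + 1) - L i) := by
    apply Finset.sum_le_sum
    intro i hi
    have hi' := Finset.mem_range.mp hi
    have h2 : 0 ≤ L (i + 1) - L i := sub_nonneg.mpr (hL i hi')
    calc (L (i + 1) - L i) * (∑ j ∈ Finset.range (i + 1), A j)
        ≤ (L (i + 1) - L i) * 1 := mul_le_mul_of_nonneg_left (hpartial (i + 1) hi') h2
      _ = L (i + 1) - L i := mul_one _
  have h3 : ∑ i ∈ Finset.range m, (L (i + 1) - L i) = L m - L 0 := Finset.sum_range_sub L m
  linarith

/-- with `1 > r₁ ≥ ⋯ ≥ r_J > 0`, `D` the root of `∑ⱼ rⱼ^D = 1`,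
`D̃` the root of `∑_{j<J} rⱼ^{D̃} = 1`, and `f(s) = 1 - ∑ⱼ rⱼ^s`, every zero `s₀`
of `f` with `D̃ < Re(s₀) < D` satisfies `Re(f'(s₀)) ≥ log r₁⁻¹ > 0`; in particular
it is a simple zero, and `|1/f'(s₀)| ≤ 1/log r₁⁻¹`. -/
theorem stmt_8
    (J : ℕ) (hJ : 2 ≤ J)
    (r : Fin J → ℝ) (hr0 : ∀ j, 0 < r j) (hr1 : ∀ j, r j < 1)
    (hanti : Antitone r)
    (D : ℝ) (hD : ∑ j, r j ^ D = 1)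
    (Dt : ℝ) (hDt : ∑ j ∈ Finset.univ.filter (fun j : Fin J => (j : ℕ) + 1 < J),
      r j ^ Dt = 1)
    (s₀ : ℂ) (hzero : 1 - ∑ j, (r j : ℂ) ^ s₀ = 0)
    (hre1 : Dt < s₀.re) (hre2 : s₀.re < D) :
    0 < Real.log (r ⟨0, by omega⟩)⁻¹ ∧
    Real.log (r ⟨0, by omega⟩)⁻¹ ≤ (deriv (fun s : ℂ => 1 - ∑ j, (r j : ℂ) ^ s) s₀).re ∧
    deriv (fun s : ℂ => 1 - ∑ j, (r j : ℂ) ^ s) s₀ ≠ 0 ∧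
    ‖1 / deriv (fun s : ℂ => 1 - ∑ j, (r j : ℂ) ^ s) s₀‖ ≤
      1 / Real.log (r ⟨0, by omega⟩)⁻¹ := by
  obtain ⟨m, rfl⟩ : ∃ m, J = m + 2 := ⟨J - 2, by omega⟩
  have h0J : (0 : ℕ) < m + 2 := by omega
  have hLpos : 0 < Real.log (r ⟨0, h0J⟩)⁻¹ := by
    rw [Real.log_inv]
    exact neg_pos.mpr (Real.log_neg (hr0 _) (hr1 _))
  -- derivative computation
  have hd : HasDerivAt (fun s : ℂ => 1 - ∑ j, (r j : ℂ) ^ s)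
      (-(∑ j, (r j : ℂ) ^ s₀ * Complex.log (r j))) s₀ := by
    apply HasDerivAt.const_sub
    apply HasDerivAt.fun_sum
    intro j _
    exact (Complex.hasStrictDerivAt_const_cpow (Or.inl (by
      exact_mod_cast (hr0 j).ne'))).hasDerivAt
  have hderiv : deriv (fun s : ℂ => 1 - ∑ j, (r j : ℂ) ^ s) s₀
      = -(∑ j, (r j : ℂ) ^ s₀ * Complex.log (r j)) := hd.deriv
  -- real part of the derivative
  have hre : (deriv (fun s : ℂ => 1 - ∑ j, (r j : ℂ) ^ s) s₀).re
      = ∑ j, (-Real.log (r j)) * ((r j : ℂ) ^ s₀).re := by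
    rw [hderiv, Complex.neg_re, Complex.re_sum, ← Finset.sum_neg_distrib]
    apply Finset.sum_congr rfl
    intro j _
    rw [← Complex.ofReal_log (hr0 j).le, mul_comm, Complex.re_ofReal_mul]
    ring
  -- ℕ-indexed data
  set A : ℕ → ℝ := fun n => if h : n < m + 2 then ((r ⟨n, h⟩ : ℂ) ^ s₀).re else 0 with hA
  set L : ℕ → ℝ := fun n => if h : n < m + 2 then -Real.log (r ⟨n, h⟩) else 0 with hL
  set Rσ : ℕ → ℝ := fun n => if h : n < m + 2 then r ⟨n, h⟩ ^ s₀.re else 0 with hRσ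
  set G : ℕ → ℝ := fun n => if h : n < m + 2 then r ⟨n, h⟩ ^ Dt else 0 with hG
  have hsum_eq : ∑ j, (-Real.log (r j)) * ((r j : ℂ) ^ s₀).re
      = ∑ i ∈ Finset.range (m + 2), L i * A i := by
    rw [← Fin.sum_univ_eq_sum_range (fun i => L i * A i) (m + 2)]
    apply Finset.sum_congr rfl
    intro j _
    simp [hA, hL, j.isLt]
  -- sum of A equals 1
  have hzero' : ∑ j, (r j : ℂ) ^ s₀ = 1 := (sub_eq_zero.mp hzero).symm
  have hAsum : ∑ i ∈ Finset.range (m + 2), A i = 1 := by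
    rw [← Fin.sum_univ_eq_sum_range A (m + 2)]
    have he : ∑ j : Fin (m + 2), A (j : ℕ) = ∑ j : Fin (m + 2), ((r j : ℂ) ^ s₀).re := by
      apply Finset.sum_congr rfl
      intro j _
      simp [hA, j.isLt]
    rw [he, ← Complex.re_sum, hzero', Complex.one_re]
  -- the strict bound on partial sums from Dt
  have e1 : ∑ j ∈ Finset.univ.filter (fun j : Fin (m + 2) => (j : ℕ) + 1 < m + 2), r j ^ Dt
      = ∑ j : Fin (m + 2), (if (j : ℕ) + 1 < m + 2 then r j ^ Dt else 0) :=
    Finset.sum_filter _ _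
  have e2 : ∑ j : Fin (m + 2), (if (j : ℕ) + 1 < m + 2 then r j ^ Dt else 0)
      = ∑ i ∈ Finset.range (m + 2), (fun n => if n + 1 < m + 2 then G n else 0) i := by
    rw [← Fin.sum_univ_eq_sum_range (fun n => if n + 1 < m + 2 then G n else 0) (m + 2)]
    apply Finset.sum_congr rfl
    intro j _
    by_cases h : (j : ℕ) + 1 < m + 2 <;> simp [hG, h, j.isLt]
  have e3 : ∑ i ∈ Finset.range (m + 2), (fun n => if n + 1 < m + 2 then G n else 0) i
      = ∑ i ∈ Finset.range (m + 1), G i := by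
    rw [Finset.sum_range_succ]
    have : ¬ (m + 1 + 1 < m + 2) := by omega
    rw [if_neg this, add_zero]
    apply Finset.sum_congr rfl
    intro i hi
    have hi' := Finset.mem_range.mp hi
    rw [if_pos (by omega)]
  have hDt' : ∑ i ∈ Finset.range (m + 1), G i = 1 := by rw [← e3, ← e2, ← e1]; exact hDt
  have hRσlt : ∑ i ∈ Finset.range (m + 1), Rσ i < 1 := by
    rw [← hDt']
    apply Finset.sum_lt_sum_of_nonempty
    · exact ⟨0, by simp⟩
    · intro i hi
      have hiJ : i < m + 2 := by have := Finset.mem_range.mp hi; omega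
      simp only [hRσ, hG, dif_pos hiJ]
      exact Real.rpow_lt_rpow_of_exponent_gt (hr0 _) (hr1 _) hre1
  -- A i ≤ Rσ i
  have hARσ : ∀ i, A i ≤ Rσ i := by
    intro i
    by_cases h : i < m + 2
    · simp only [hA, hRσ, dif_pos h]
      calc ((r ⟨i, h⟩ : ℂ) ^ s₀).re ≤ ‖(r ⟨i, h⟩ : ℂ) ^ s₀‖ := Complex.re_le_norm _
        _ = r ⟨i, h⟩ ^ s₀.re := Complex.norm_cpow_eq_rpow_re_of_pos (hr0 _) s₀
    · simp [hA, hRσ, h]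
  have hRσnn : ∀ i, 0 ≤ Rσ i := by
    intro i
    by_cases h : i < m + 2
    · simp only [hRσ, dif_pos h]; exact (Real.rpow_pos_of_pos (hr0 _) _).le
    · simp [hRσ, h]
  have hpartial : ∀ k, k ≤ m + 1 → ∑ i ∈ Finset.range k, A i ≤ 1 := by
    intro k hk
    calc ∑ i ∈ Finset.range k, A i ≤ ∑ i ∈ Finset.range k, Rσ i :=
          Finset.sum_le_sum fun i _ => hARσ i
      _ ≤ ∑ i ∈ Finset.range (m + 1), Rσ i :=
          Finset.sum_le_sum_of_subset_of_nonneg (Finset.range_subset_range.mpr hk)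
            (fun i _ _ => hRσnn i)
      _ ≤ 1 := hRσlt.le
  have hLmono : ∀ i, i < m + 1 → L i ≤ L (i + 1) := by
    intro i hi
    have h1 : i < m + 2 := by omega
    have h2 : i + 1 < m + 2 := by omega
    simp only [hL, dif_pos h1, dif_pos h2]
    have hle : r ⟨i + 1, h2⟩ ≤ r ⟨i, h1⟩ := hanti (by simp [Fin.le_def])
    have := Real.log_le_log (hr0 _) hle
    linarith
  -- the key inequality
  have hkey : L 0 ≤ ∑ i ∈ Finset.range (m + 2), L i * A i :=
    abel_key (m + 1) L A hLmono hAsum hpartial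
  have hL0 : L 0 = Real.log (r ⟨0, h0J⟩)⁻¹ := by
    simp only [hL, dif_pos h0J, Real.log_inv]
  have hmain : Real.log (r ⟨0, h0J⟩)⁻¹
      ≤ (deriv (fun s : ℂ => 1 - ∑ j, (r j : ℂ) ^ s) s₀).re := by
    rw [hre, hsum_eq, ← hL0]
    exact hkey
  refine ⟨hLpos, hmain, ?_, ?_⟩
  · intro h
    rw [h] at hmain
    simp only [Complex.zero_re] at hmain
    linarith
  · rw [norm_div, norm_one]
    have habs : Real.log (r ⟨0, h0J⟩)⁻¹
        ≤ ‖deriv (fun s : ℂ => 1 - ∑ j, (r j : ℂ) ^ s) s₀‖ :=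
      le_trans hmain (Complex.re_le_norm _)
    exact one_div_le_one_div_of_le hLpos habs
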